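/- Let A be a δ-ring in which p lies in the Jacobson radical, and let d ∈ A be weakly distinguished (i.e., (d, δ(d)) = A). Then for every n ≥ 0, the image of φⁿ(δ(d)) in A/(d) is invertible, where φ is the Frobenius lift of the δ-structure. -/

import Mathlib

/-- A `δ`-ring (relative to the prime `p`): a commutative ring `R` together with an
operation `δ : R → R` satisfying `δ(1) = 0`, the additivity law
`δ(x+y) = δ(x) + δ(y) - ∑_{j=1}^{p-1} (1/p)·C(p,j)·x^{p-j}·y^j`
(note that `C(p,j)/p` is an integer for `0 < j < p` when `p` is prime), and
`δ(xy) = x^p δ(y) + y^p δ(x) + p δ(x) δ(y)`. -/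
class DeltaRing (p : ℕ) (R : Type*) [CommRing R] where
  δ : R → R
  δ_one : δ 1 = 0
  δ_add : ∀ x y : R, δ (x + y) =
    δ x + δ y - ∑ j ∈ Finset.Ioo 0 p, ((p.choose j / p : ℕ) : R) * x ^ (p - j) * y ^ j
  δ_mul : ∀ x y : R, δ (x * y) = x ^ p * δ y + y ^ p * δ x + (p : R) * δ x * δ y

/-- The Frobenius lift `φ(x) = x^p + p·δ(x)` associated to a `δ`-structure; it is a ring
endomorphism lifting the Frobenius modulo `p`. -/
def DeltaRing.phi (p : ℕ) (R : Type*) [CommRing R] [DeltaRing p R] : R → R :=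
  fun x => x ^ p + (p : R) * DeltaRing.δ (p := p) x

/-- Let `A` be a `δ`-ring in which `p` lies in the Jacobson radical,
and let `d ∈ A` be *weakly distinguished*, i.e. `(d, δ(d)) = A`.  Then for every `n ≥ 0`
the image of `φⁿ(δ(d))` in `A/(d)` is invertible, where `φ` is the Frobenius lift of the
`δ`-structure. -/
theorem stmt_10 (p : ℕ) [Fact p.Prime] (A : Type*) [CommRing A] [DeltaRing p A]
    (hp : (p : A) ∈ Ideal.jacobson (⊥ : Ideal A))
    (d : A) (hd : Ideal.span {d, DeltaRing.δ (p := p) d} = ⊤) :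
    ∀ n : ℕ,
      IsUnit (Ideal.Quotient.mk (Ideal.span {d})
        ((DeltaRing.phi p A)^[n] (DeltaRing.δ (p := p) d))) := by

  set I := Ideal.span {d} with hI
  set f := Ideal.Quotient.mk I with hf
  -- p is in the Jacobson radical of the quotient
  have hpj : f (p : A) ∈ Ideal.jacobson (⊥ : Ideal (A ⧸ I)) := by
    rw [Ideal.mem_jacobson_bot]
    intro y
    obtain ⟨z, rfl⟩ := Ideal.Quotient.mk_surjective y
    have h := ((Ideal.mem_jacobson_bot).mp hp z).map f
    simpa [mul_comm] using h
  -- unit + jacobson element is a unit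
  have key : ∀ (u j : A ⧸ I), IsUnit u → j ∈ Ideal.jacobson (⊥ : Ideal (A ⧸ I)) →
      IsUnit (u + j) := by
    intro u j hu hj
    obtain ⟨v, rfl⟩ := hu
    have h1 : IsUnit ((↑v⁻¹ : A ⧸ I) * j + 1) := by
      have := (Ideal.mem_jacobson_bot).mp hj (↑v⁻¹ : A ⧸ I)
      rwa [mul_comm] at this
    have : (v : A ⧸ I) + j = v * ((↑v⁻¹ : A ⧸ I) * j + 1) := by
      rw [mul_add, mul_one, ← mul_assoc]
      simp [add_comm]
    rw [this]
    exact (v.isUnit).mul h1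
  -- δ d is a unit in the quotient
  have hd0 : f d = 0 := by
    rw [hf, Ideal.Quotient.eq_zero_iff_mem, hI]
    exact Ideal.subset_span rfl
  have hu0 : IsUnit (f (DeltaRing.δ (p := p) d)) := by
    have h1 : (1 : A) ∈ Ideal.span {d, DeltaRing.δ (p := p) d} := hd ▸ Submodule.mem_top
    rw [Ideal.mem_span_pair] at h1
    obtain ⟨a, b, hab⟩ := h1
    refine IsUnit.of_mul_eq_one (f b) ?_
    have := congrArg f hab
    rw [map_add, map_mul, map_mul, map_one, hd0, mul_zero, zero_add] at this
    rw [mul_comm]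
    exact this
  intro n
  induction n with
  | zero => simpa using hu0
  | succ n ih =>
    rw [Function.iterate_succ_apply']
    set x := (DeltaRing.phi p A)^[n] (DeltaRing.δ (p := p) d)
    have : f (DeltaRing.phi p A x) = (f x) ^ p + f (p : A) * f (DeltaRing.δ (p := p) x) := by
      simp [DeltaRing.phi, map_add, map_mul, map_pow]
    rw [this]
    exact key _ _ (ih.pow p) (Ideal.mul_mem_right _ _ hpj)
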